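/- Let (C,V,J) be a J²C-module and v ∈ V nonzero. For any ζ, η ∈ C the element ζ ·_v (η ·_v ζ) equals the Clifford algebra product ζηζ (computed via the decomposition ζ = a1 + z with z ∈ C'), and in particular is independent of v. -/

import Mathlib

open scoped RealInnerProductSpace

set_option maxHeartbeats 1000000 in
theorem stmt7 {C V : Type*} [NormedAddCommGroup C] [InnerProductSpace ℝ C]
    [FiniteDimensional ℝ C] [NormedAddCommGroup V] [InnerProductSpace ℝ V]
    (e : C) (he : ‖e‖ = 1) (J : C →ₗ[ℝ] V →ₗ[ℝ] V)
    (hJ1 : ∀ v : V, J e v = v)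
    (hJnorm : ∀ (ζ : C) (v : V), ‖J ζ v‖ = ‖ζ‖ * ‖v‖)
    (hJ2 : ∀ (v : V) (ζ η : C), ∃ ξ : C, J ζ (J η v) = J ξ v)
    (Q : QuadraticForm ℝ ↥((Submodule.span ℝ {e})ᗮ))
    (hQ : ∀ z : ↥((Submodule.span ℝ {e})ᗮ), Q z = -‖(z : C)‖ ^ 2)
    (u v : V) (hu : u ≠ 0) (hv : v ≠ 0)
    (mulu mulv : C → C → C)
    (hmulu : ∀ ζ η : C, J (mulu ζ η) u = J ζ (J η u))
    (hmulv : ∀ ζ η : C, J (mulv ζ η) v = J ζ (J η v))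
    (ζ η : C) :
    mulu ζ (mulu η ζ) = mulv ζ (mulv η ζ) ∧
    ∀ f : C → CliffordAlgebra Q,
      (∀ ξ : C, f ξ = algebraMap ℝ (CliffordAlgebra Q) ⟪ξ, e⟫ +
        CliffordAlgebra.ι Q (Submodule.orthogonalProjectionOnto ((Submodule.span ℝ {e})ᗮ) ξ)) →
      f (mulv ζ (mulv η ζ)) = f ζ * f η * f ζ := by
  -- injectivity of ξ ↦ J ξ w for w ≠ 0
  have hinj : ∀ (w : V), w ≠ 0 → ∀ ξ₁ ξ₂ : C, J ξ₁ w = J ξ₂ w → ξ₁ = ξ₂ := by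
    intro w hw ξ₁ ξ₂ h
    have h0 : ‖ξ₁ - ξ₂‖ * ‖w‖ = 0 := by
      rw [← hJnorm]
      simp [map_sub, h]
    rcases mul_eq_zero.1 h0 with h1 | h1
    · exact sub_eq_zero.1 (norm_eq_zero.1 h1)
    · exact absurd (norm_eq_zero.1 h1) hw
  -- polarization
  have hpol : ∀ (ξ₁ ξ₂ : C) (w : V), ⟪J ξ₁ w, J ξ₂ w⟫ = ⟪ξ₁, ξ₂⟫ * ‖w‖ ^ 2 := by
    intro ξ₁ ξ₂ w
    have e1 : ‖J ξ₁ w + J ξ₂ w‖ ^ 2 = ‖ξ₁ + ξ₂‖ ^ 2 * ‖w‖ ^ 2 := by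
      have : J ξ₁ w + J ξ₂ w = J (ξ₁ + ξ₂) w := by simp [map_add]
      rw [this, hJnorm]; ring
    have e2 : ‖J ξ₁ w‖ ^ 2 = ‖ξ₁‖ ^ 2 * ‖w‖ ^ 2 := by rw [hJnorm]; ring
    have e3 : ‖J ξ₂ w‖ ^ 2 = ‖ξ₂‖ ^ 2 * ‖w‖ ^ 2 := by rw [hJnorm]; ring
    have A := norm_add_sq_real (J ξ₁ w) (J ξ₂ w)
    have B := norm_add_sq_real ξ₁ ξ₂
    nlinarith [A, B, e1, e2, e3]
  -- skew-adjointness of J z for z ⟂ e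
  have hskew0 : ∀ (z : C), ⟪z, e⟫ = 0 → ∀ w : V, ⟪J z w, w⟫ = 0 := by
    intro z hz w
    have := hpol z e w
    rw [hz, hJ1 w] at this
    simpa using this
  have hskew : ∀ (z : C), ⟪z, e⟫ = 0 → ∀ x y : V, ⟪J z x, y⟫ = -⟪x, J z y⟫ := by
    intro z hz x y
    have h1 := hskew0 z hz (x + y)
    have h2 := hskew0 z hz x
    have h3 := hskew0 z hz y
    simp only [map_add, inner_add_left, inner_add_right] at h1
    have h4 : ⟪J z y, x⟫ = ⟪x, J z y⟫ := real_inner_comm _ _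
    linarith
  -- J z ∘ J z = -‖z‖² • id
  have hsq : ∀ (z : C), ⟪z, e⟫ = 0 → ∀ w : V, J z (J z w) = (-(‖z‖ ^ 2)) • w := by
    intro z hz w
    by_cases hw : w = 0
    · simp [hw]
    obtain ⟨ξ, hξ⟩ := hJ2 w z z
    have hw2 : ‖w‖ ^ 2 ≠ 0 := pow_ne_zero _ (norm_ne_zero_iff.2 hw)
    have h1 : ⟪ξ, e⟫ = -(‖z‖ ^ 2) := by
      have a1 : ⟪J ξ w, J e w⟫ = ⟪ξ, e⟫ * ‖w‖ ^ 2 := hpol ξ e w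
      rw [hJ1, ← hξ] at a1
      have a2 : ⟪J z (J z w), w⟫ = -⟪J z w, J z w⟫ := by
        rw [hskew z hz, real_inner_comm]
      have a3 : ⟪J z w, J z w⟫ = ⟪z, z⟫ * ‖w‖ ^ 2 := hpol z z w
      have a4 : ⟪z, z⟫ = ‖z‖ ^ 2 := real_inner_self_eq_norm_sq z
      rw [a2, a3, a4] at a1
      have : (⟪ξ, e⟫ + ‖z‖ ^ 2) * ‖w‖ ^ 2 = 0 := by linarith [a1]
      rcases mul_eq_zero.1 this with h | h
      · linarith
      · exact absurd h hw2
    have h2 : ‖ξ‖ = ‖z‖ ^ 2 := by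
      have := hJnorm ξ w
      rw [← hξ] at this
      rw [hJnorm, hJnorm] at this
      have hwn : ‖w‖ ≠ 0 := norm_ne_zero_iff.2 hw
      have h' : (‖z‖ ^ 2) * ‖w‖ = ‖ξ‖ * ‖w‖ := by linarith [this]
      exact (mul_right_cancel₀ hwn h').symm
    have h3 : ξ = (-(‖z‖ ^ 2)) • e := by
      have : ‖ξ + (‖z‖ ^ 2) • e‖ ^ 2 = 0 := by
        rw [norm_add_sq_real]
        rw [real_inner_smul_right, h1, norm_smul]
        simp [he, h2, abs_of_nonneg (sq_nonneg ‖z‖)]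
        ring
      have h4 : ξ + (‖z‖ ^ 2) • e = 0 := by
        have := pow_eq_zero_iff (n := 2) (by norm_num) |>.1 this
        exact norm_eq_zero.1 this
      have h5 : ξ = -((‖z‖ ^ 2) • e) := by
        rw [← add_eq_zero_iff_eq_neg] at *
        exact h4
      rw [h5]; module
    rw [hξ, h3]
    simp [map_smul, hJ1]
  -- anticommutation
  have hanti : ∀ (z w' : C), ⟪z, e⟫ = 0 → ⟪w', e⟫ = 0 →
      ∀ x : V, J w' (J z x) = (-(2 * ⟪z, w'⟫)) • x - J z (J w' x) := by
    intro z w' hz hw' x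
    have h1 := hsq (z + w') (by rw [inner_add_left, hz, hw']; ring) x
    have h2 := hsq z hz x
    have h3 := hsq w' hw' x
    have hn : ‖z + w'‖ ^ 2 = ‖z‖ ^ 2 + 2 * ⟪z, w'⟫ + ‖w'‖ ^ 2 := norm_add_sq_real z w'
    simp only [map_add, LinearMap.add_apply] at h1
    rw [h2, h3, hn] at h1
    rw [eq_sub_iff_add_eq]
    calc J w' (J z x) + J z (J w' x)
        = (-‖z‖ ^ 2 • x + J w' (J z x) + (J z (J w' x) + -‖w'‖ ^ 2 • x))
            + ‖z‖ ^ 2 • x + ‖w'‖ ^ 2 • x := by module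
      _ = (-(‖z‖ ^ 2 + 2 * ⟪z, w'⟫ + ‖w'‖ ^ 2)) • x + ‖z‖ ^ 2 • x + ‖w'‖ ^ 2 • x := by
          rw [h1]
      _ = (-(2 * ⟪z, w'⟫)) • x := by module
  -- decomposition data
  set a : ℝ := ⟪ζ, e⟫ with ha
  set b : ℝ := ⟪η, e⟫ with hb
  set z : C := ζ - a • e with hzdef
  set w : C := η - b • e with hwdef
  have hee : ⟪e, e⟫ = (1 : ℝ) := by
    rw [real_inner_self_eq_norm_sq, he]; norm_num
  have hze : ⟪z, e⟫ = 0 := by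
    rw [hzdef, inner_sub_left, real_inner_smul_left, hee]; simp [ha]
  have hwe : ⟪w, e⟫ = 0 := by
    rw [hwdef, inner_sub_left, real_inner_smul_left, hee]; simp [hb]
  have hζ : ζ = a • e + z := by rw [hzdef]; abel
  have hη : η = b • e + w := by rw [hwdef]; abel
  have hζop : ∀ x : V, J ζ x = a • x + J z x := by
    intro x
    conv_lhs => rw [hζ]
    simp [map_add, map_smul, hJ1]
  have hηop : ∀ x : V, J η x = b • x + J w x := by
    intro x
    conv_lhs => rw [hη]
    simp [map_add, map_smul, hJ1]
  set s : ℝ := ⟪z, w⟫ with hs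
  set n : ℝ := ‖z‖ ^ 2 with hn
  set ξC : C := (a ^ 2 * b - 2 * a * s - b * n) • e + (a ^ 2 + n) • w
      + (2 * a * b - 2 * s) • z with hξC
  have hz2 : ∀ x : V, J z (J z x) = (-n) • x := fun x => hsq z hze x
  have hwz : ∀ x : V, J w (J z x) = (-(2 * s)) • x - J z (J w x) :=
    fun x => hanti z w hze hwe x
  have key : ∀ x : V, J ζ (J η (J ζ x)) = J ξC x := by
    intro x
    rw [hζop, hηop, hζop]
    simp only [map_add, map_smul, smul_add, hwz, hz2, smul_sub, map_sub]
    rw [hξC]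
    simp only [map_add, map_smul, LinearMap.add_apply, LinearMap.smul_apply, hJ1]
    module
  have hmv : mulv ζ (mulv η ζ) = ξC := by
    apply hinj v hv
    rw [hmulv, hmulv, key v]
  have hmu : mulu ζ (mulu η ζ) = ξC := by
    apply hinj u hu
    rw [hmulu, hmulu, key u]
  refine ⟨hmu.trans hmv.symm, ?_⟩
  intro f hf
  rw [hmv]
  simp only [hf]
  have hzK : z ∈ (Submodule.span ℝ {e})ᗮ :=
    Submodule.mem_orthogonal_singleton_iff_inner_right.2 (by rw [real_inner_comm]; exact hze)
  have hwK : w ∈ (Submodule.span ℝ {e})ᗮ :=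
    Submodule.mem_orthogonal_singleton_iff_inner_right.2 (by rw [real_inner_comm]; exact hwe)
  set zK : ↥((Submodule.span ℝ {e})ᗮ) := ⟨z, hzK⟩ with hzKdef
  set wK : ↥((Submodule.span ℝ {e})ᗮ) := ⟨w, hwK⟩ with hwKdef
  have hPe : Submodule.orthogonalProjectionOnto ((Submodule.span ℝ {e})ᗮ) e = 0 :=
    Submodule.orthogonalProjectionOnto_apply_of_mem_orthogonal
      (Submodule.le_orthogonal_orthogonal _ (Submodule.mem_span_singleton_self e))
  have hPz : Submodule.orthogonalProjectionOnto ((Submodule.span ℝ {e})ᗮ) z = zK :=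
    Submodule.orthogonalProjectionOnto_mem_subspace_eq_self zK
  have hPw : Submodule.orthogonalProjectionOnto ((Submodule.span ℝ {e})ᗮ) w = wK :=
    Submodule.orthogonalProjectionOnto_mem_subspace_eq_self wK
  have hPζ : Submodule.orthogonalProjectionOnto ((Submodule.span ℝ {e})ᗮ) ζ = zK := by
    conv_lhs => rw [hζ]
    rw [map_add, map_smul, hPe, hPz]
    simp
  have hPη : Submodule.orthogonalProjectionOnto ((Submodule.span ℝ {e})ᗮ) η = wK := by
    conv_lhs => rw [hη]
    rw [map_add, map_smul, hPe, hPw]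
    simp
  have hPξ : Submodule.orthogonalProjectionOnto ((Submodule.span ℝ {e})ᗮ) ξC
      = (a ^ 2 + n) • wK + (2 * a * b - 2 * s) • zK := by
    rw [hξC]
    rw [map_add, map_add, map_smul, map_smul, map_smul, hPe, hPz, hPw]
    simp
  have hiζ : ⟪ζ, e⟫ = a := ha.symm
  have hiη : ⟪η, e⟫ = b := hb.symm
  have hiξ : ⟪ξC, e⟫ = a ^ 2 * b - 2 * a * s - b * n := by
    rw [hξC]
    rw [inner_add_left, inner_add_left, real_inner_smul_left, real_inner_smul_left,
      real_inner_smul_left, hee, hze, hwe]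
    ring
  rw [hPζ, hPη, hPξ, hiζ, hiη, hiξ]
  set α := algebraMap ℝ (CliffordAlgebra Q) with hα
  set x : CliffordAlgebra Q := CliffordAlgebra.ι Q zK with hx0
  set y : CliffordAlgebra Q := CliffordAlgebra.ι Q wK with hy0
  have hx : x * x = (-n) • 1 := by
    rw [hx0, CliffordAlgebra.ι_sq_scalar, hQ, Algebra.algebraMap_eq_smul_one]
  have hyx : y * x = (-(2 * s)) • 1 - x * y := by
    have hpolar := CliffordAlgebra.ι_mul_ι_add_swap (Q := Q) zK wK
    have hval : QuadraticMap.polar (⇑Q) zK wK = -(2 * s) := by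
      rw [QuadraticMap.polar, hQ, hQ, hQ]
      have hc : ((zK + wK : ↥((Submodule.span ℝ {e})ᗮ)) : C) = z + w := rfl
      rw [hc]
      have := norm_add_sq_real z w
      rw [hs, hn] at *
      simp only [hzKdef, hwKdef]
      nlinarith [this]
    rw [hval, Algebra.algebraMap_eq_smul_one] at hpolar
    rw [← hpolar]
    abel
  have hxyx : x * (y * x) = (-(2 * s)) • x + n • y := by
    rw [hyx, mul_sub, mul_smul_comm, mul_one, ← mul_assoc, hx, smul_mul_assoc, one_mul]
    module
  rw [map_add (CliffordAlgebra.ι Q), map_smul, map_smul, ← hx0, ← hy0,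
    Algebra.algebraMap_eq_smul_one, Algebra.algebraMap_eq_smul_one,
    Algebra.algebraMap_eq_smul_one]
  simp only [add_mul, mul_add, smul_mul_assoc, mul_smul_comm, one_mul, mul_one,
    smul_smul, mul_assoc]
  rw [hx, hxyx, hyx]
  module
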